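/- Let es be a weak evacuation schedule on T = {0, 1, …, t_max} for a building graph G, and let Δ ∈ ℕ with Δ ≤ t_max. Define the Δ-delayed schedule es^Δ by es^Δ(t) = es(0) for 0 ≤ t < Δ and es^Δ(t) = es(t − Δ) for Δ ≤ t ≤ t_max. Then es^Δ is a weak evacuation schedule. -/
import Mathlib


open scoped Classical

/-- A building graph `G = ⟨V, E, EX, c, d⟩`: vertices `V`, edges `E ⊆ V × V`,
exits `EX ⊂ V`, capacity functions (`cV` on vertices, `cE` on edges) and
travel-time functions (`dV` on vertices, `dE` on edges), with `d(v) = 0` for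
every vertex. -/
structure BuildingGraph (V : Type) where
  E : Set (V × V)
  EX : Set V
  cV : V → ℤ
  cE : V × V → ℤ
  dV : V → ℤ
  dE : V × V → ℤ
  dV_zero : ∀ v, dV v = 0

/-- A location is a vertex or an edge. -/
abbrev Loc (V : Type) := V ⊕ (V × V)

/-- A weak evacuation schedule on `T = {0, 1, …, tmax}`:
(1) from a vertex one can only stay, move onto an incident edge, or move to an
adjacent vertex; (2) from an edge one can only stay or move to one of its
endpoints; (3) moving from `v₁` to an adjacent `v₂` takes at least `d(v₁,v₂)`
time; (4) a person who reaches an exit stays there. -/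
def IsWES {V P : Type} (G : BuildingGraph V) (tmax : ℕ)
    (wes : ℕ → P → Loc V) : Prop :=
  (∀ (p : P) (t : ℕ) (v₁ : V), t < tmax → wes t p = Sum.inl v₁ →
      wes (t + 1) p = Sum.inl v₁ ∨
      ∃ v₂, (v₁, v₂) ∈ G.E ∧
        (wes (t + 1) p = Sum.inr (v₁, v₂) ∨ wes (t + 1) p = Sum.inl v₂)) ∧
  (∀ (p : P) (t : ℕ) (v₁ v₂ : V), t < tmax → (v₁, v₂) ∈ G.E →
      wes t p = Sum.inr (v₁, v₂) →
      wes (t + 1) p = Sum.inr (v₁, v₂) ∨ wes (t + 1) p = Sum.inl v₁ ∨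
        wes (t + 1) p = Sum.inl v₂) ∧
  (∀ (p : P) (t k : ℕ) (v₁ v₂ : V), (v₁, v₂) ∈ G.E → t + k ≤ tmax →
      wes t p = Sum.inl v₁ → wes (t + k) p = Sum.inl v₂ →
      G.dE (v₁, v₂) ≤ (k : ℤ)) ∧
  (∀ (p : P) (t' t'' : ℕ), t' < t'' → t'' ≤ tmax →
      (∃ v ∈ G.EX, wes t' p = Sum.inl v) → wes t'' p = wes t' p)

/-- A strong evacuation schedule: a WES additionally satisfying the vertex and
edge capacity constraints at every time point, and such that every person has
reached an exit by time `tmax`. -/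
def IsSES {V P : Type} [Fintype P] (G : BuildingGraph V) (tmax : ℕ)
    (es : ℕ → P → Loc V) : Prop :=
  IsWES G tmax es ∧
  (∀ t ≤ tmax, ∀ v : V, ({p : P | es t p = Sum.inl v}.ncard : ℤ) ≤ G.cV v) ∧
  (∀ t ≤ tmax, ∀ e ∈ G.E, ({p : P | es t p = Sum.inr e}.ncard : ℤ) ≤ G.cE e) ∧
  (∀ p : P, ∃ v ∈ G.EX, es tmax p = Sum.inl v)

/-- `Nev G es D` is the number of people evacuated by deadline `D`, i.e. the
number of people located at an exit at time `D`. -/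
noncomputable def Nev {V P : Type} [Fintype P] (G : BuildingGraph V)
    (es : ℕ → P → Loc V) (D : ℕ) : ℕ :=
  {p : P | ∃ v ∈ G.EX, es D p = Sum.inl v}.ncard

/-- The `Δ`-delayed version of a schedule: `es^Δ(t) = es(0)` for `t < Δ` and
`es^Δ(t) = es(t − Δ)` for `Δ ≤ t`. -/
def delayed {V P : Type} (es : ℕ → P → Loc V) (Δ : ℕ) : ℕ → P → Loc V :=
  fun t => if t < Δ then es 0 else es (t - Δ)

/-- The `Δ`-delayed version of a weak evacuation schedule is a
weak evacuation schedule. -/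
theorem delayed_isWES {V P : Type} (G : BuildingGraph V) (tmax : ℕ)
    (es : ℕ → P → Loc V) (hes : IsWES G tmax es)
    (Δ : ℕ) (hΔ : Δ ≤ tmax) :
    IsWES G tmax (delayed es Δ) := by
  obtain ⟨h1, h2, h3, h4⟩ := hes
  have deq : ∀ t, delayed es Δ t = es (t - Δ) := by
    intro t
    rcases Nat.lt_or_ge t Δ with h | h
    · have h0 : t - Δ = 0 := by omega
      simp [delayed, h, h0]
    · simp [delayed, Nat.not_lt.mpr h]
  refine ⟨?_, ?_, ?_, ?_⟩
  · intro p t v₁ ht h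
    rw [deq] at h
    rw [deq]
    rcases Nat.lt_or_ge t Δ with hc | hc
    · left
      have h' : t + 1 - Δ = t - Δ := by omega
      rw [h']; exact h
    · have h' : t + 1 - Δ = t - Δ + 1 := by omega
      rw [h']
      exact h1 p (t - Δ) v₁ (by omega) h
  · intro p t v₁ v₂ ht he h
    rw [deq] at h
    rw [deq]
    rcases Nat.lt_or_ge t Δ with hc | hc
    · left
      have h' : t + 1 - Δ = t - Δ := by omega
      rw [h']; exact h
    · have h' : t + 1 - Δ = t - Δ + 1 := by omega
      rw [h']
      exact h2 p (t - Δ) v₁ v₂ (by omega) he h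
  · intro p t k v₁ v₂ he htk hv₁ hv₂
    rw [deq] at hv₁ hv₂
    rcases Nat.lt_or_ge t Δ with hc | hc
    · have ht0 : t - Δ = 0 := by omega
      rw [ht0] at hv₁
      have hk : t + k - Δ = 0 + (t + k - Δ) := by omega
      rw [hk] at hv₂
      have := h3 p 0 (t + k - Δ) v₁ v₂ he (by omega) hv₁ hv₂
      have : G.dE (v₁, v₂) ≤ ((t + k - Δ : ℕ) : ℤ) := this
      have hle : ((t + k - Δ : ℕ) : ℤ) ≤ (k : ℤ) := by omega
      linarith
    · have hk : t + k - Δ = (t - Δ) + k := by omega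
      rw [hk] at hv₂
      exact h3 p (t - Δ) k v₁ v₂ he (by omega) hv₁ hv₂
  · intro p t' t'' ht htt hex
    rw [deq] at hex ⊢
    rw [deq]
    rcases Nat.eq_or_lt_of_le (Nat.le_refl (t' - Δ)) with _ | _
    all_goals {
      rcases Nat.lt_or_ge (t' - Δ) (t'' - Δ) with hc | hc
      · exact h4 p (t' - Δ) (t'' - Δ) hc (by omega) hex
      · have : t'' - Δ = t' - Δ := by omega
        rw [this] }
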